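/- arXiv:2404.11297 — 5 statements merged into one kernel-verified Lean document; each statement's English description precedes it below -/
import Mathlib

section
/- Let G be a group with subgroups H, K satisfying H ∩ K = {e}. The map (h,k) ↦ h ▷ k, defined on Ω = {(h,k) ∈ H × K : hk ∈ KH}, is a local (partial) left action of H on K: (e,k) ∈ Ω and e ▷ k = k for all k ∈ K; and if (h₂,k) ∈ Ω, then (h₁, h₂ ▷ k) ∈ Ω if and only if (h₁h₂, k) ∈ Ω, in which case h₁ ▷ (h₂ ▷ k) = (h₁h₂) ▷ k. -/
private lemma uniq_aux {G : Type*} [Group G] {H K : Subgroup G} (hHK : H ⊓ K = ⊥)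
    {k₁ h₁ k₂ h₂ : G} (hk₁ : k₁ ∈ K) (hh₁ : h₁ ∈ H) (hk₂ : k₂ ∈ K) (hh₂ : h₂ ∈ H)
    (heq : k₁ * h₁ = k₂ * h₂) : k₁ = k₂ := by
  have hmem : k₂⁻¹ * k₁ ∈ H ⊓ K := by
    constructor
    · have hk₁' : k₁ = k₂ * h₂ * h₁⁻¹ := by rw [← heq]; group
      have : k₂⁻¹ * k₁ = h₂ * h₁⁻¹ := by rw [hk₁']; group
      rw [this]
      exact H.mul_mem hh₂ (H.inv_mem hh₁)
    · exact K.mul_mem (K.inv_mem hk₂) hk₁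
  rw [hHK] at hmem
  have : k₂⁻¹ * k₁ = 1 := hmem
  have := mul_eq_one_iff_inv_eq.mp this
  simp at this
  exact this.symm

theorem double_groupoid_partial_left_action
    {G : Type*} [Group G] (H K : Subgroup G) (hHK : H ⊓ K = ⊥) :
    -- (e, k) ∈ Ω and e ▷ k = k for all k ∈ K
    (∀ k : G, k ∈ K → ((1 : G) * k = k * 1 ∧
      ∀ p a : G, p ∈ K → a ∈ H → (1 : G) * k = p * a → p = k)) ∧
    -- if (h₂, k) ∈ Ω then (h₁, h₂ ▷ k) ∈ Ω iff (h₁ h₂, k) ∈ Ω,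
    -- in which case h₁ ▷ (h₂ ▷ k) = (h₁ h₂) ▷ k
    (∀ h₁ h₂ k k₂ a₂ : G, h₁ ∈ H → h₂ ∈ H → k ∈ K → k₂ ∈ K → a₂ ∈ H →
      h₂ * k = k₂ * a₂ →
      (((∃ k' ∈ K, ∃ h' ∈ H, h₁ * k₂ = k' * h') ↔
        (∃ k' ∈ K, ∃ h' ∈ H, (h₁ * h₂) * k = k' * h')) ∧
       (∀ k' a' k'' a'' : G, k' ∈ K → a' ∈ H → k'' ∈ K → a'' ∈ H →
         h₁ * k₂ = k' * a' → (h₁ * h₂) * k = k'' * a'' → k' = k''))) := by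
  constructor
  · intro k hk
    refine ⟨by group, ?_⟩
    intro p a hp ha heq
    rw [one_mul] at heq
    exact uniq_aux hHK hp ha hk (H.one_mem) (by rw [mul_one]; exact heq.symm)
  · intro h₁ h₂ k k₂ a₂ hh₁ hh₂ hk hk₂ ha₂ heq2
    have key : ∀ x : G, h₁ * h₂ * k = h₁ * k₂ * a₂ := by
      intro _
      rw [mul_assoc, heq2, ← mul_assoc]
    constructor
    · constructor
      · rintro ⟨k', hk', h', hh', he⟩
        exact ⟨k', hk', h' * a₂, H.mul_mem hh' ha₂, by rw [key 1, he, mul_assoc]⟩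
      · rintro ⟨k', hk', h', hh', he⟩
        refine ⟨k', hk', h' * a₂⁻¹, H.mul_mem hh' (H.inv_mem ha₂), ?_⟩
        have : h₁ * k₂ * a₂ = k' * h' := by rw [← key 1, he]
        calc h₁ * k₂ = h₁ * k₂ * a₂ * a₂⁻¹ := by group
          _ = k' * h' * a₂⁻¹ := by rw [this]
          _ = k' * (h' * a₂⁻¹) := by rw [mul_assoc]
    · intro k' a' k'' a'' hk' ha' hk'' ha'' he1 he2
      have : k' * (a' * a₂) = k'' * a'' := by
        rw [← mul_assoc, ← he1, ← key 1, he2]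
      exact uniq_aux hHK hk' (H.mul_mem ha' ha₂) hk'' ha'' this
end

section
/- Let 𝒢 = 𝒢(H,K) be the double groupoid of an admissible pair, with operations (h₁, h₂ ▷ k₂)·(h₂,k₂) = (h₁h₂, k₂) and (h,k)⁻¹ = (h⁻¹, h ▷ k). Then the map γ: 𝒢 → 𝒢 defined by γ(h,k) = (h ◁ k, k⁻¹) is an involutive groupoid automorphism of 𝒢, i.e., γ ∘ γ = id, γ maps composable pairs to composable pairs, and γ((h₁,k₁)(h₂,k₂)) = γ(h₁,k₁)γ(h₂,k₂) whenever the product is defined. -/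
lemma KH_unique {G : Type*} [Group G] (H K : Subgroup G) (hHK : H ⊓ K = ⊥)
    {p q a b : G} (hp : p ∈ K) (hq : q ∈ K) (ha : a ∈ H) (hb : b ∈ H)
    (h : p * a = q * b) : p = q ∧ a = b := by
  have hmem : a * b⁻¹ ∈ H ⊓ K := by
    constructor
    · exact H.mul_mem ha (H.inv_mem hb)
    · have ha' : a = p⁻¹ * (q * b) := by rw [← h]; group
      have : a * b⁻¹ = p⁻¹ * q := by rw [ha']; group
      rw [this]; exact K.mul_mem (K.inv_mem hp) hq
  rw [hHK, Subgroup.mem_bot] at hmem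
  have hab : a = b := by
    have := mul_inv_eq_one.mp hmem; exact this
  constructor
  · have : p * a = q * a := by rw [h, hab]
    exact mul_right_cancel this
  · exact hab

theorem double_groupoid_gamma_automorphism
    {G : Type*} [Group G] (H K : Subgroup G) (hHK : H ⊓ K = ⊥) :
    -- γ(h,k) = (h ◁ k, k⁻¹) is well defined: (h ◁ k) k⁻¹ = (h ▷ k)⁻¹ h ∈ KH,
    -- so (h ◁ k) ▷ k⁻¹ = (h ▷ k)⁻¹ and (h ◁ k) ◁ k⁻¹ = h
    (∀ h k p a : G, h ∈ H → k ∈ K → p ∈ K → a ∈ H → h * k = p * a →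
      a * k⁻¹ = p⁻¹ * h) ∧
    -- γ ∘ γ = id
    (∀ h k p a q b : G, h ∈ H → k ∈ K → p ∈ K → a ∈ H → q ∈ K → b ∈ H →
      h * k = p * a → a * k⁻¹ = q * b → q = p⁻¹ ∧ b = h) ∧
    -- γ maps composable pairs to composable pairs and is multiplicative:
    -- for (h₁, h₂ ▷ k₂) · (h₂, k₂) = (h₁ h₂, k₂),
    -- γ(h₁ h₂, k₂) = γ(h₁, h₂ ▷ k₂) · γ(h₂, k₂)
    (∀ h₁ h₂ k₂ p₂ a₂ p₁ a₁ q b : G,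
      h₁ ∈ H → h₂ ∈ H → k₂ ∈ K → p₂ ∈ K → a₂ ∈ H → p₁ ∈ K → a₁ ∈ H → q ∈ K → b ∈ H →
      h₂ * k₂ = p₂ * a₂ → h₁ * p₂ = p₁ * a₁ → (h₁ * h₂) * k₂ = q * b →
      a₂ * k₂⁻¹ = p₂⁻¹ * h₂ ∧ q = p₁ ∧ b = a₁ * a₂) := by
  have key : ∀ h k p a : G, h * k = p * a → a * k⁻¹ = p⁻¹ * h := by
    intro h k p a he
    have : a = p⁻¹ * h * k := by rw [mul_assoc, he]; group
    rw [this]; group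
  refine ⟨fun h k p a _ _ _ _ he => key h k p a he, ?_, ?_⟩
  · intro h k p a q b hh hk hp ha hq hb he1 he2
    have h1 := key h k p a he1
    rw [h1] at he2
    obtain ⟨e1, e2⟩ := KH_unique H K hHK (K.inv_mem hp) hq hh hb he2
    exact ⟨e1.symm, e2.symm⟩
  · intro h₁ h₂ k₂ p₂ a₂ p₁ a₁ q b hh1 hh2 hk2 hp2 ha2 hp1 ha1 hq hb he1 he2 he3
    refine ⟨key h₂ k₂ p₂ a₂ he1, ?_⟩
    have : (h₁ * h₂) * k₂ = p₁ * (a₁ * a₂) := by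
      rw [mul_assoc, he1, ← mul_assoc, he2, mul_assoc]
    rw [he3] at this
    obtain ⟨e1, e2⟩ := KH_unique H K hHK hq hp1 hb (H.mul_mem ha1 ha2) this
    exact ⟨e1, e2⟩
end

section
/- Let 𝒜 be a unital ring with group of units 𝒜*, and let G = 𝒜* × 𝒜 be the group with multiplication (a,x)(b,y) = (ab, x + ay) and identity (1,0). Let H = {(a, a−1) : a ∈ 𝒜*} and K = {(b,0) : b ∈ 𝒜*}. Then H and K are subgroups of G, H ∩ K = {(1,0)}, and HK = {(a,x) ∈ G : 1 + x ∈ 𝒜*}. -/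
/-- Multiplication of the group `G = 𝒜* × 𝒜`, `(a,x)(b,y) = (ab, x + ay)`. -/
def rgMul {A : Type*} [Ring A] (p q : Aˣ × A) : Aˣ × A :=
  (p.1 * q.1, p.2 + (p.1 : A) * q.2)

/-- Inversion in `G = 𝒜* × 𝒜`, `(a,x)⁻¹ = (a⁻¹, -a⁻¹x)`. -/
def rgInv {A : Type*} [Ring A] (p : Aˣ × A) : Aˣ × A :=
  (p.1⁻¹, -(((p.1⁻¹ : Aˣ) : A) * p.2))

/-- The identity `(1,0)` of `G = 𝒜* × 𝒜`. -/
def rgOne (A : Type*) [Ring A] : Aˣ × A := (1, 0)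

/-- The subgroup `H = {(a, a-1) : a ∈ 𝒜*}`. -/
def rgH (A : Type*) [Ring A] : Set (Aˣ × A) := {p | p.2 = (p.1 : A) - 1}

/-- The subgroup `K = {(b, 0) : b ∈ 𝒜*}`. -/
def rgK (A : Type*) [Ring A] : Set (Aˣ × A) := {p | p.2 = 0}

theorem ring_example_subgroups_and_HK
    (A : Type*) [Ring A] :
    -- H is a subgroup
    (rgOne A ∈ rgH A ∧ (∀ p ∈ rgH A, ∀ q ∈ rgH A, rgMul p q ∈ rgH A) ∧
      ∀ p ∈ rgH A, rgInv p ∈ rgH A) ∧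
    -- K is a subgroup
    (rgOne A ∈ rgK A ∧ (∀ p ∈ rgK A, ∀ q ∈ rgK A, rgMul p q ∈ rgK A) ∧
      ∀ p ∈ rgK A, rgInv p ∈ rgK A) ∧
    -- H ∩ K = {(1,0)}
    (rgH A ∩ rgK A = {rgOne A}) ∧
    -- HK = {(a,x) : 1 + x invertible}
    ({g | ∃ h ∈ rgH A, ∃ k ∈ rgK A, g = rgMul h k}
      = {p : Aˣ × A | IsUnit ((1 : A) + p.2)}) := by
  refine ⟨⟨by simp [rgOne, rgH], ?_, ?_⟩, ⟨rfl, ?_, ?_⟩, ?_, ?_⟩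
  · rintro ⟨a, x⟩ hp ⟨b, y⟩ hq
    simp only [rgH, Set.mem_setOf_eq] at *
    simp only [rgMul, hp, hq, mul_sub, mul_one]
    abel
  · rintro ⟨a, x⟩ hp
    simp only [rgH, Set.mem_setOf_eq] at *
    subst hp
    simp only [rgInv, mul_sub, mul_one, neg_sub]
    simp
  · rintro ⟨a, x⟩ hp ⟨b, y⟩ hq
    simp only [rgK, Set.mem_setOf_eq] at *
    simp [rgMul, hp, hq]
  · rintro ⟨a, x⟩ hp
    simp only [rgK, Set.mem_setOf_eq] at *
    simp [rgInv, hp]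
  · ext ⟨a, x⟩
    simp only [rgH, rgK, rgOne, Set.mem_inter_iff, Set.mem_setOf_eq, Set.mem_singleton_iff,
      Prod.mk.injEq]
    constructor
    · rintro ⟨h1, rfl⟩
      have : (a : A) = 1 := sub_eq_zero.mp h1.symm
      exact ⟨Units.ext this, rfl⟩
    · rintro ⟨rfl, rfl⟩
      simp
  · ext ⟨a, x⟩
    simp only [Set.mem_setOf_eq]
    constructor
    · rintro ⟨⟨b, y⟩, hb, ⟨c, z⟩, hc, heq⟩
      simp only [rgH, rgK, Set.mem_setOf_eq] at hb hc
      simp only [rgMul, Prod.mk.injEq] at heq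
      obtain ⟨h1, h2⟩ := heq
      subst hb hc
      rw [h2]
      simp only [mul_zero, add_zero]
      rw [add_sub_cancel]
      exact b.isUnit
    · rintro hu
      obtain ⟨u, hu⟩ := hu
      refine ⟨(u, (u : A) - 1), rfl, (u⁻¹ * a, 0), rfl, ?_⟩
      simp [rgMul, hu, sub_add_cancel, ← mul_assoc]
end

section
/- With G = 𝒜* × 𝒜, H = {(a,a−1) : a ∈ 𝒜*}, K = {(b,0) : b ∈ 𝒜*} as above: for a, b ∈ 𝒜*, the element (a,a−1)(b,0) lies in KH if and only if a(b−1)+1 ∈ 𝒜*, and in that case (a,a−1) ▷ (b,0) = (a(b−1)+1, 0) and (a,a−1) ◁ (b,0) = ((a(b−1)+1)⁻¹ab, (a(b−1)+1)⁻¹ab − 1). -/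
theorem ring_example_local_actions
    (A : Type*) [Ring A] (a b : Aˣ) :
    -- (a, a−1)(b, 0) ∈ KH iff a(b−1)+1 is invertible
    ((∃ k ∈ rgK A, ∃ h ∈ rgH A, rgMul (a, (a : A) - 1) (b, (0 : A)) = rgMul k h)
      ↔ IsUnit ((a : A) * ((b : A) - 1) + 1)) ∧
    -- in that case, (a,a−1) ▷ (b,0) = (a(b−1)+1, 0) and
    -- (a,a−1) ◁ (b,0) = ((a(b−1)+1)⁻¹ab, (a(b−1)+1)⁻¹ab − 1)
    (∀ u : Aˣ, (u : A) = (a : A) * ((b : A) - 1) + 1 →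
      rgMul (a, (a : A) - 1) (b, (0 : A))
        = rgMul ((u, (0 : A)) : Aˣ × A)
            ((u⁻¹ * a * b : Aˣ), ((u⁻¹ * a * b : Aˣ) : A) - 1)) := by
  constructor
  · constructor
    · rintro ⟨k, hk, h, hh, heq⟩
      simp only [rgK, rgH, Set.mem_setOf_eq] at hk hh
      simp only [rgMul, Prod.mk.injEq, Prod.ext_iff] at heq
      obtain ⟨h1, h2⟩ := heq
      rw [hk, hh] at h2
      have hcd : ((a : A) * b = (k.1 : A) * h.1) := by
        exact_mod_cast congrArg Units.val h1
      have : (k.1 : A) = (a : A) * ((b : A) - 1) + 1 := by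
        linear_combination (norm := noncomm_ring) h2 - hcd
      rw [← this]; exact k.1.isUnit
    · rintro ⟨u, hu⟩
      refine ⟨(u, 0), rfl, ((u⁻¹ * a * b : Aˣ), ((u⁻¹ * a * b : Aˣ) : A) - 1), rfl, ?_⟩
      simp only [rgMul, Prod.mk.injEq]
      constructor
      · rw [← mul_assoc, ← mul_assoc, mul_inv_cancel, one_mul]
      · have huu : (u : A) * (↑u⁻¹ : A) = 1 := u.mul_inv
        push_cast
        linear_combination (norm := noncomm_ring) -huu * ((a : A) * b) + hu
  · intro u hu
    simp only [rgMul, Prod.mk.injEq]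
    constructor
    · rw [← mul_assoc, ← mul_assoc, mul_inv_cancel, one_mul]
    · have huu : (u : A) * (↑u⁻¹ : A) = 1 := u.mul_inv
      push_cast
      linear_combination (norm := noncomm_ring) -huu * ((a : A) * b) + hu
end

section
/- Let G = SL₃(ℤ), H the subgroup of matrices of block form [[4n₁+1, 2n₂, 0],[2n₃, 4n₄+1, 0],[0,0,1]] with determinant 1 (Sanov's copy of F₂), and K = {B_x : x ∈ ℤ} where B_x = [[1,0,0],[0,1,x],[0,0,1]]. Then for A ∈ H with upper-right 2×2 entry 2n₂ and lower-middle diagonal entry 4n₄+1, and x ∈ ℤ: A·B_x ∈ KH if and only if n₂·x = 0, and in that case A ▷ B_x = B_{(4n₄+1)x} and A ◁ B_x = A. -/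
open Matrix

/-- The matrices of Sanov's copy of `F₂` inside `SL₃(ℤ)`. -/
def hMat (n₁ n₂ n₃ n₄ : ℤ) : Matrix (Fin 3) (Fin 3) ℤ :=
  !![4*n₁+1, 2*n₂, 0; 2*n₃, 4*n₄+1, 0; 0, 0, 1]

/-- The matrices `B_x` forming the copy of `ℤ` inside `SL₃(ℤ)`. -/
def bMat (x : ℤ) : Matrix (Fin 3) (Fin 3) ℤ :=
  !![1, 0, 0; 0, 1, x; 0, 0, 1]

/-- The subgroup `H` (Sanov's copy of `F₂` in `SL₃(ℤ)`). -/
def sanovH : Set (Matrix (Fin 3) (Fin 3) ℤ) :=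
  {M | ∃ n₁ n₂ n₃ n₄ : ℤ, M = hMat n₁ n₂ n₃ n₄ ∧ M.det = 1}

/-- The subgroup `K ≅ ℤ`. -/
def intK : Set (Matrix (Fin 3) (Fin 3) ℤ) :=
  {M | ∃ x : ℤ, M = bMat x}

lemma key (n₁ n₂ n₃ n₄ x : ℤ) (h : n₂ * x = 0) :
    hMat n₁ n₂ n₃ n₄ * bMat x = bMat ((4*n₄+1) * x) * hMat n₁ n₂ n₃ n₄ := by
  ext i j
  fin_cases i <;> fin_cases j <;>
    simp [hMat, bMat, Matrix.mul_apply, Fin.sum_univ_three, vecHead, vecTail] <;>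
      first
      | exact mul_eq_zero.mp h
      | exact Or.inl rfl

theorem sanov_example_partial_action
    (n₁ n₂ n₃ n₄ x : ℤ) (hdet : (hMat n₁ n₂ n₃ n₄).det = 1) :
    -- A·B_x ∈ KH iff n₂·x = 0
    ((∃ B ∈ intK, ∃ A' ∈ sanovH, hMat n₁ n₂ n₃ n₄ * bMat x = B * A') ↔ n₂ * x = 0) ∧
    -- and in that case A ▷ B_x = B_{(4n₄+1)x} and A ◁ B_x = A
    (n₂ * x = 0 →
      hMat n₁ n₂ n₃ n₄ * bMat x = bMat ((4*n₄+1) * x) * hMat n₁ n₂ n₃ n₄) := by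
  refine ⟨⟨?_, fun h => ?_⟩, key n₁ n₂ n₃ n₄ x⟩
  · rintro ⟨B, ⟨y, rfl⟩, A', ⟨m₁, m₂, m₃, m₄, rfl, -⟩, heq⟩
    have h02 := congrFun (congrFun heq 0) 2
    simp [hMat, bMat, Matrix.mul_apply, Fin.sum_univ_three] at h02
    rcases h02 with h | h <;> simp [h]
  · exact ⟨bMat ((4*n₄+1) * x), ⟨_, rfl⟩, hMat n₁ n₂ n₃ n₄,
      ⟨n₁, n₂, n₃, n₄, rfl, hdet⟩, key n₁ n₂ n₃ n₄ x h⟩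
end
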